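/- Let f₀, f₁ be orientation-preserving circle homeomorphisms with fixed points and no common fixed points, and suppose there is a cycle s₀ < s₁ < ⋯ < s_{n−1} < s₀ + 1 = s_n (in a lift), where s_{k+1} lies in the basin of attraction of s_k under f_{k mod 2} for each k. Then for every x ∈ S¹ and every ε > 0 there exists a finite composition h of f₀ and f₁ such that |h(x) − s₀| < ε. -/

import Mathlib

open Filter Topology
open Fin.NatCast

private def wordMap (f : Fin 2 → ℝ → ℝ) (w : List (Fin 2)) : ℝ → ℝ :=
  w.foldr (fun i g => f i ∘ g) id

private lemma wordMap_append (f : Fin 2 → ℝ → ℝ) (a b : List (Fin 2)) (x : ℝ) :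
    wordMap f (a ++ b) x = wordMap f a (wordMap f b x) := by
  induction a with
  | nil => rfl
  | cons i t ih =>
    show f i (wordMap f (t ++ b) x) = f i (wordMap f t (wordMap f b x))
    rw [ih]

private lemma wordMap_replicate (f : Fin 2 → ℝ → ℝ) (m : ℕ) (i : Fin 2) (x : ℝ) :
    wordMap f (List.replicate m i) x = (f i)^[m] x := by
  induction m with
  | zero => rfl
  | succ m ih =>
    show f i (wordMap f (List.replicate m i) x) = (f i)^[m + 1] x
    rw [ih, Function.iterate_succ_apply']

private lemma lift_int (f : Fin 2 → ℝ → ℝ) (hlift : ∀ i x, f i (x + 1) = f i x + 1)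
    (i : Fin 2) (m : ℤ) (x : ℝ) : f i (x + m) = f i x + m := by
  induction m using Int.induction_on with
  | zero => simp
  | succ k ih =>
    push_cast at ih ⊢
    rw [← add_assoc, hlift, ih]
    ring
  | pred k ih =>
    push_cast at ih ⊢
    have h := hlift i (x - k - 1)
    have h2 : x - (k : ℝ) - 1 + 1 = x + -(k : ℝ) := by ring
    rw [h2, ih] at h
    have h3 : x + (-(k : ℝ) - 1) = x - k - 1 := by ring
    rw [h3]
    linarith

private lemma wordMap_int (f : Fin 2 → ℝ → ℝ) (hlift : ∀ i x, f i (x + 1) = f i x + 1)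
    (w : List (Fin 2)) (m : ℤ) (x : ℝ) : wordMap f w (x + m) = wordMap f w x + m := by
  induction w with
  | nil => rfl
  | cons i t ih =>
    show f i (wordMap f t (x + m)) = f i (wordMap f t x) + m
    rw [ih, lift_int f hlift]

/-- Given lifts `f₀, f₁` of circle homeomorphisms with fixed points, no common fixed
points, and a cycle `s₀ < s₁ < ⋯ < s_{n−1} < s₀ + 1 = s_n` where `s_{k+1}` is attracted
to `s_k` by `f_{k mod 2}`, every point of the circle can be moved arbitrarily close to
`s₀` (mod 1) by a finite composition of `f₀` and `f₁`. -/
theorem cycle_attracts_every_point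
    (f : Fin 2 → ℝ → ℝ)
    (hmono : ∀ i, StrictMono (f i))
    (hcont : ∀ i, Continuous (f i))
    (hbij : ∀ i, Function.Bijective (f i))
    (hlift : ∀ i x, f i (x + 1) = f i x + 1)
    (hnc : ∀ x : ℝ, ¬(f 0 x = x ∧ f 1 x = x))
    (n : ℕ) (hn : 1 ≤ n) (s : ℕ → ℝ)
    (horder : ∀ k < n, s k < s (k + 1))
    (hsn : s n = s 0 + 1)
    (hfix : ∀ k ≤ n, f (k % 2) (s k) = s k)
    (hbasin : ∀ k < n,
      Tendsto (fun m => (f (k % 2))^[m] (s (k + 1))) atTop (𝓝 (s k))) :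
    ∀ (x : ℝ) (ε : ℝ), 0 < ε →
      ∃ (w : List (Fin 2)) (m : ℤ),
        |(w.foldr (fun i g => f i ∘ g) id) x - (s 0 + m)| < ε := by
  classical
  have hmonoIt : ∀ (i : Fin 2) (m : ℕ), Monotone ((f i)^[m]) :=
    fun i m => (hmono i).monotone.iterate m
  have hfixIt : ∀ k, k ≤ n → ∀ m : ℕ, (f (k % 2))^[m] (s k) = s k :=
    fun k hk m => Function.iterate_fixed (hfix k hk) m
  have hdec : ∀ k < n, f (k % 2) (s (k + 1)) < s (k + 1) := by
    intro k hk
    by_contra hge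
    push_neg at hge
    have key : ∀ m : ℕ, s (k + 1) ≤ (f (k % 2))^[m] (s (k + 1)) := by
      intro m
      induction m with
      | zero => simp
      | succ m ih =>
        rw [Function.iterate_succ_apply']
        exact le_trans hge ((hmono _).monotone ih)
    have h := ge_of_tendsto' (hbasin k hk) key
    linarith [horder k hk]
  have hP : ∀ k, k < n → ∀ ε : ℝ, 0 < ε → ∃ δ : ℝ, 0 < δ ∧
      ∀ y : ℝ, s k ≤ y → y < s k + δ →
        ∃ w : List (Fin 2), |wordMap f w y - s 0| < ε := by
    intro k
    induction k with
    | zero =>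
      intro _ ε hε
      refine ⟨ε, hε, fun y h1 h2 => ⟨[], ?_⟩⟩
      have h : wordMap f [] y = y := rfl
      rw [h, abs_of_nonneg (by linarith)]
      linarith
    | succ k ih =>
      intro hk1 ε hε
      have hk : k < n := by omega
      obtain ⟨δ, hδpos, hδ⟩ := ih hk ε hε
      obtain ⟨m, hm⟩ := (Filter.Tendsto.eventually_lt_const
        (show s k < s k + δ by linarith) (hbasin k hk)).exists
      have hlt := hdec k hk
      have hev : ∀ᶠ y in 𝓝 (s (k + 1)), f (k % 2) y < s (k + 1) :=
        Filter.Tendsto.eventually_lt_const hlt ((hcont _).continuousAt)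
      rw [Metric.eventually_nhds_iff] at hev
      obtain ⟨δ', hδ'pos, hδ'⟩ := hev
      refine ⟨δ', hδ'pos, fun y hy1 hy2 => ?_⟩
      have hdy : dist y (s (k + 1)) < δ' := by
        rw [Real.dist_eq, abs_of_nonneg (by linarith)]
        linarith
      have h1 : f (k % 2) y < s (k + 1) := hδ' hdy
      have h2 : s k < f (k % 2) y := by
        have h := hmono (k % 2) (lt_of_lt_of_le (horder k hk) hy1)
        rwa [hfix k hk.le] at h
      have hz1 : s k ≤ (f (k % 2))^[m] (f (k % 2) y) := by
        have h := hmonoIt (k % 2) m h2.le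
        rwa [hfixIt k hk.le m] at h
      have hz2 : (f (k % 2))^[m] (f (k % 2) y) < s k + δ :=
        lt_of_le_of_lt (hmonoIt (k % 2) m h1.le) hm
      obtain ⟨w, hw⟩ := hδ _ hz1 hz2
      refine ⟨w ++ List.replicate (m + 1) ((k : Fin 2) % 2), ?_⟩
      rw [wordMap_append, wordMap_replicate, Function.iterate_succ_apply]
      exact hw
  intro x ε hε
  set m0 : ℤ := ⌊x - s 0⌋ with hm0def
  have hx1 : s 0 ≤ x - m0 := by
    have h := Int.floor_le (x - s 0)
    rw [← hm0def] at h
    linarith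
  have hx2 : x - m0 < s n := by
    have h := Int.lt_floor_add_one (x - s 0)
    rw [← hm0def] at h
    rw [hsn]
    linarith
  set k := Nat.findGreatest (fun j => s j ≤ x - m0) (n - 1) with hkdef
  have hk0 : s k ≤ x - m0 := by
    rw [hkdef]
    exact Nat.findGreatest_spec (P := fun j => s j ≤ x - (m0:ℝ)) (Nat.zero_le _) hx1
  have hkle : k ≤ n - 1 := Nat.findGreatest_le _
  have hkn : k < n := by omega
  have hk1 : x - m0 < s (k + 1) := by
    by_cases hc : k + 1 ≤ n - 1
    · have h := Nat.findGreatest_is_greatest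
        (show Nat.findGreatest (fun j => s j ≤ x - m0) (n - 1) < k + 1 by omega) hc
      exact lt_of_not_ge h
    · have h : k + 1 = n := by omega
      rw [h]
      exact hx2
  obtain ⟨δ, hδpos, hδ⟩ := hP k hkn ε hε
  obtain ⟨m, hm⟩ := (Filter.Tendsto.eventually_lt_const
    (show s k < s k + δ by linarith) (hbasin k hkn)).exists
  have hz1 : s k ≤ (f (k % 2))^[m] (x - m0) := by
    have h := hmonoIt (k % 2) m hk0
    rwa [hfixIt k hkn.le m] at h
  have hz2 : (f (k % 2))^[m] (x - m0) < s k + δ :=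
    lt_of_le_of_lt (hmonoIt (k % 2) m hk1.le) hm
  obtain ⟨w, hw⟩ := hδ _ hz1 hz2
  refine ⟨w ++ List.replicate m ((k : Fin 2) % 2), m0, ?_⟩
  show |wordMap f (w ++ List.replicate m ((k : Fin 2) % 2)) x - (s 0 + m0)| < ε
  have hxeq : x = (x - m0) + (m0 : ℝ) := by ring
  rw [hxeq, wordMap_int f hlift, wordMap_append, wordMap_replicate]
  have heq : wordMap f w ((f (k % 2))^[m] (x - m0)) + m0 - (s 0 + m0)
      = wordMap f w ((f (k % 2))^[m] (x - m0)) - s 0 := by ring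
  rw [heq]
  exact hw
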